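/- Let K ≥ 1 be an integer, L > 0, 0 < α ≤ 1/(4L), and C_f, C_g, μ₀, M₀, M_{0,f} ≥ 0. Let e_0, ..., e_{K−1} ≥ 0 and β_0, ..., β_{K−1} ≥ 0 satisfy β_k ≤ M₀/K for all k and Σ_{k=0}^{K−1} (α/2 − Lα²) e_k ≤ Σ_{k=0}^{K−1} ( α √(2 (C_f² + μ₀² C_g²) β_k) + L α² β_k ) + M_{0,f}. Then (1/K) Σ_{k=0}^{K−1} e_k ≤ 4 √(2 M₀ (C_f² + μ₀² C_g²)) · K^{−1/2} + 4 α L M₀ · K^{−1} + 4 M_{0,f}/(K α). -/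

import Mathlib

/-- Deterministic form of Theorem 5.1 (SMOO with preferences): with fixed outer step
`α ≤ 1/(4L)` and inner error bounds `β k ≤ M₀/K` (from `S = K²` inner steps),
`(1/K) Σ e_k ≤ 4 √(2 M₀ (C_f² + μ₀² C_g²)) / √K + 4 α L M₀ / K + 4 M_{0,f}/(K α)`. -/
theorem msmd_preference_rate_fixed_steps
    (K : ℕ) (hK : 1 ≤ K)
    (L α Cf Cg μ₀ M₀ M₀f : ℝ)
    (hL : 0 < L) (hα0 : 0 < α) (hα : α ≤ 1 / (4 * L))
    (hCf : 0 ≤ Cf) (hCg : 0 ≤ Cg) (hμ₀ : 0 ≤ μ₀) (hM₀ : 0 ≤ M₀) (hM₀f : 0 ≤ M₀f)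
    (e β : ℕ → ℝ)
    (he : ∀ k < K, 0 ≤ e k) (hβ0 : ∀ k < K, 0 ≤ β k)
    (hβ : ∀ k < K, β k ≤ M₀ / K)
    (hsum : ∑ k ∈ Finset.range K, (α / 2 - L * α ^ 2) * e k ≤
      (∑ k ∈ Finset.range K,
        (α * Real.sqrt (2 * (Cf ^ 2 + μ₀ ^ 2 * Cg ^ 2) * β k) + L * α ^ 2 * β k)) + M₀f) :
    (1 / K) * ∑ k ∈ Finset.range K, e k ≤
      4 * Real.sqrt (2 * M₀ * (Cf ^ 2 + μ₀ ^ 2 * Cg ^ 2)) / Real.sqrt K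
        + 4 * α * L * M₀ / K + 4 * M₀f / (K * α) := by
  set C2 : ℝ := Cf ^ 2 + μ₀ ^ 2 * Cg ^ 2 with hC2
  have hC2nn : 0 ≤ C2 := by positivity
  have hKr : (1 : ℝ) ≤ (K : ℝ) := by exact_mod_cast hK
  have hKpos : (0 : ℝ) < (K : ℝ) := lt_of_lt_of_le one_pos hKr
  set sK : ℝ := Real.sqrt K with hsK
  have hsK2 : sK ^ 2 = (K : ℝ) := Real.sq_sqrt hKpos.le
  have hsKpos : 0 < sK := Real.sqrt_pos.mpr hKpos
  set A : ℝ := Real.sqrt (2 * M₀ * C2) with hA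
  have hAnn : 0 ≤ A := Real.sqrt_nonneg _
  -- each summand bound
  have hterm : ∀ k < K,
      α * Real.sqrt (2 * C2 * β k) + L * α ^ 2 * β k ≤
        α * A / sK + L * α ^ 2 * (M₀ / K) := by
    intro k hk
    have hβk := hβ k hk
    have h1 : Real.sqrt (2 * C2 * β k) ≤ A / sK := by
      have : 2 * C2 * β k ≤ 2 * M₀ * C2 / K := by
        have := mul_le_mul_of_nonneg_left hβk (by positivity : (0:ℝ) ≤ 2 * C2)
        calc 2 * C2 * β k ≤ 2 * C2 * (M₀ / K) := this
          _ = 2 * M₀ * C2 / K := by ring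
      calc Real.sqrt (2 * C2 * β k) ≤ Real.sqrt (2 * M₀ * C2 / K) :=
            Real.sqrt_le_sqrt this
        _ = A / sK := by
            rw [hA, hsK, Real.sqrt_div (by positivity : (0:ℝ) ≤ 2 * M₀ * C2)]
    have h2 : L * α ^ 2 * β k ≤ L * α ^ 2 * (M₀ / K) :=
      mul_le_mul_of_nonneg_left hβk (by positivity)
    have h3 := mul_le_mul_of_nonneg_left h1 hα0.le
    have h4 : α * (A / sK) = α * A / sK := (mul_div_assoc _ _ _).symm
    linarith [h3, h2, h4.ge, h4.le]
  -- sum bound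
  have hsum2 : ∑ k ∈ Finset.range K,
      (α * Real.sqrt (2 * C2 * β k) + L * α ^ 2 * β k) ≤
      K * (α * A / sK + L * α ^ 2 * (M₀ / K)) := by
    calc ∑ k ∈ Finset.range K, (α * Real.sqrt (2 * C2 * β k) + L * α ^ 2 * β k)
        ≤ ∑ k ∈ Finset.range K, (α * A / sK + L * α ^ 2 * (M₀ / K)) := by
          apply Finset.sum_le_sum
          intro k hk
          exact hterm k (Finset.mem_range.mp hk)
      _ = K * (α * A / sK + L * α ^ 2 * (M₀ / K)) := by
          rw [Finset.sum_const, Finset.card_range, nsmul_eq_mul]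
  -- lower bound on LHS sum
  have hcoef : α / 4 ≤ α / 2 - L * α ^ 2 := by
    have h4L : 0 < 4 * L := by linarith
    have : α * (4 * L) ≤ 1 := by
      calc α * (4 * L) ≤ (1 / (4 * L)) * (4 * L) :=
            mul_le_mul_of_nonneg_right hα h4L.le
        _ = 1 := by field_simp
    nlinarith [sq_nonneg α, hα0]
  have hlow : α / 4 * ∑ k ∈ Finset.range K, e k ≤
      ∑ k ∈ Finset.range K, (α / 2 - L * α ^ 2) * e k := by
    rw [Finset.mul_sum]
    apply Finset.sum_le_sum
    intro k hk
    exact mul_le_mul_of_nonneg_right hcoef (he k (Finset.mem_range.mp hk))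
  have hS : α / 4 * ∑ k ∈ Finset.range K, e k ≤
      K * (α * A / sK + L * α ^ 2 * (M₀ / K)) + M₀f := by
    linarith [hlow, hsum, hsum2]
  -- finish
  have hKA : (K : ℝ) * (α * A / sK) = sK * α * A := by
    field_simp
    linear_combination (-A) * hsK2
  have hKM : (K : ℝ) * (L * α ^ 2 * (M₀ / K)) = L * α ^ 2 * M₀ := by
    field_simp
  have hS' : α / 4 * ∑ k ∈ Finset.range K, e k ≤ sK * α * A + L * α ^ 2 * M₀ + M₀f := by
    rw [mul_add, hKA, hKM] at hS; linarith
  have key : (1 / (K : ℝ)) * ∑ k ∈ Finset.range K, e k ≤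
      (4 / (α * K)) * (sK * α * A + L * α ^ 2 * M₀ + M₀f) := by
    have := mul_le_mul_of_nonneg_left hS' (by positivity : (0:ℝ) ≤ 4 / (α * K))
    calc (1 / (K : ℝ)) * ∑ k ∈ Finset.range K, e k
        = (4 / (α * K)) * (α / 4 * ∑ k ∈ Finset.range K, e k) := by
          field_simp
      _ ≤ _ := this
  have hrhs : (4 / (α * K)) * (sK * α * A + L * α ^ 2 * M₀ + M₀f) =
      4 * A / sK + 4 * α * L * M₀ / K + 4 * M₀f / (K * α) := by
    have h4A : (4:ℝ) * A / sK = 4 * sK * A / K := by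
      rw [div_eq_div_iff hsKpos.ne' hKpos.ne']
      linear_combination (-4 * A) * hsK2
    rw [h4A]
    field_simp
  rw [hrhs] at key
  exact key
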